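/- Let N be a binary reticulation-visible network, C a lowest big tree node component of N, T a binary phylogenetic tree with L(T) = L(N), ℓ ∈ L_C, and let v_1, …, v_t, v_{t+1} be the unique directed path in T from v_1 = ρ(T) to v_{t+1} = ℓ, with T_i the subtree of T branching off this path at v_i for 1 ≤ i ≤ t and T_{t+1} = {ℓ}. Set s_C = min{ s : L(T_s) ∩ L_C ≠ ∅ }. If N displays T, then the subnetwork D_N(ρ(C)) displays the subtree D_T(v_{s_C}). -/

import Mathlib

/-!
Framework for rooted phylogenetic networks, formalized as directed graphs
given by an adjacency relation `A : V → V → Prop` on a vertex type `V`,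
with a distinguished root `ρ`.  Leaves are identified with their (unique)
labels, i.e. the labelling is the identity on leaf vertices.
-/

namespace PhyloNet

variable {V : Type} {W : Type}

/-- Indegree of a vertex. -/
noncomputable def inDeg (A : V → V → Prop) (v : V) : ℕ := {u | A u v}.ncard

/-- Outdegree of a vertex. -/
noncomputable def outDeg (A : V → V → Prop) (v : V) : ℕ := {w | A v w}.ncard

/-- `p` is a directed path (walk) from `u` to `v`, given as the list of its vertices. -/
def IsPath (A : V → V → Prop) (u v : V) (p : List V) : Prop :=
  p.Chain' A ∧ p.head? = some u ∧ p.getLast? = some v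

/-- `A` with root `ρ` is a phylogenetic network: a finite rooted acyclic digraph whose
root has indegree 0 and outdegree ≥ 2, from which every node is reachable, and in which
every non-root node is either a leaf (indegree 1, outdegree 0), an internal tree node
(indegree 1, outdegree ≥ 2) or a reticulation (indegree ≥ 2, outdegree 1). -/
structure IsNetwork (A : V → V → Prop) (ρ : V) : Prop where
  finite : Finite V
  acyclic : ∀ v, ¬ Relation.TransGen A v v
  root_indeg : inDeg A ρ = 0
  root_outdeg : 2 ≤ outDeg A ρ
  reach_from_root : ∀ v, Relation.ReflTransGen A ρ v
  degree_cond : ∀ v, v ≠ ρ →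
    (inDeg A v = 1 ∧ (outDeg A v = 0 ∨ 2 ≤ outDeg A v)) ∨ (2 ≤ inDeg A v ∧ outDeg A v = 1)

/-- Reticulation node: indegree ≥ 2 and outdegree 1. -/
def IsRet (A : V → V → Prop) (v : V) : Prop := 2 ≤ inDeg A v ∧ outDeg A v = 1

/-- Leaf: indegree 1 and outdegree 0. -/
def IsLeaf (A : V → V → Prop) (v : V) : Prop := inDeg A v = 1 ∧ outDeg A v = 0

/-- Tree node: any node that is not a reticulation node. -/
def IsTreeNode (A : V → V → Prop) (v : V) : Prop := ¬ IsRet A v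

/-- `u` is visible on `v`: every directed path from the root `ρ` to `v` contains `u`. -/
def Visible (A : V → V → Prop) (ρ u v : V) : Prop := ∀ p, IsPath A ρ v p → u ∈ p

/-- A network is reticulation-visible if every reticulation node is visible on some leaf. -/
def RetVisible (A : V → V → Prop) (ρ : V) : Prop :=
  ∀ r, IsRet A r → ∃ ℓ, IsLeaf A ℓ ∧ Visible A ρ r ℓ

/-- Undirected adjacency in the subgraph `N − R(N)` induced on tree nodes. -/
def TAdj (A : V → V → Prop) (u v : V) : Prop :=
  IsTreeNode A u ∧ IsTreeNode A v ∧ (A u v ∨ A v u)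

/-- `S` is a tree node component: a connected component (ignoring directions) of the
subgraph induced on the tree nodes. -/
def IsTNC (A : V → V → Prop) (S : Set V) : Prop :=
  ∃ u, IsTreeNode A u ∧ S = {v | Relation.ReflTransGen (TAdj A) u v}

/-- `r` is the root of the tree node component `S`: it lies in `S` and has indegree 0
within `N − R(N)`, i.e. it has no tree-node parent. -/
def CompRoot (A : V → V → Prop) (S : Set V) (r : V) : Prop :=
  r ∈ S ∧ ∀ u, IsTreeNode A u → ¬ A u r

/-- Tree node component `C'` is below tree node component `C''`. -/
def Below (A : V → V → Prop) (C' C'' : Set V) : Prop :=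
  ∃ r, IsRet A r ∧ (∃ c, A r c ∧ CompRoot A C' c) ∧ (∃ p ∈ C'', A p r)

/-- A big tree node component: a tree node component with at least two nodes. -/
def BigTNC (A : V → V → Prop) (C : Set V) : Prop :=
  IsTNC A C ∧ ∃ a ∈ C, ∃ b ∈ C, a ≠ b

/-- A single-leaf component: its node set is `{ℓ}` for some leaf `ℓ`. -/
def SingleLeafTNC (A : V → V → Prop) (C : Set V) : Prop :=
  ∃ ℓ, IsLeaf A ℓ ∧ C = {ℓ}

/-- A lowest big tree node component: a big tree node component `C` such that every
tree node component whose root is a proper descendant of the root of `C` is a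
single-leaf component. -/
def LowestBig (A : V → V → Prop) (C : Set V) : Prop :=
  BigTNC A C ∧ ∀ C' r' rC, IsTNC A C' → CompRoot A C' r' → CompRoot A C rC →
    Relation.TransGen A rC r' → SingleLeafTNC A C'

/-- An inner reticulation: all of its parents lie in one and the same tree node component. -/
def InnerRet (A : V → V → Prop) (r : V) : Prop :=
  IsRet A r ∧ ∃ S, IsTNC A S ∧ ∀ p, A p r → p ∈ S

/-- `IR(C)`: reticulations all of whose parents lie in `C`. -/
def IRset (A : V → V → Prop) (C : Set V) : Set V :=
  {r | IsRet A r ∧ ∀ p, A p r → p ∈ C}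

/-- `CR(C)`: reticulations with at least one parent in `C` and at least one parent outside `C`. -/
def CRset (A : V → V → Prop) (C : Set V) : Set V :=
  {r | IsRet A r ∧ (∃ p, A p r ∧ p ∈ C) ∧ (∃ p, A p r ∧ p ∉ C)}

/-- `L_C`: the leaves of the network lying in `C` together with the children of the
inner reticulations below `C`. -/
def LCset (A : V → V → Prop) (C : Set V) : Set V :=
  {ℓ | ℓ ∈ C ∧ IsLeaf A ℓ} ∪ {x | ∃ r ∈ IRset A C, A r x}

/-- Bicombining: every reticulation node has indegree exactly 2. -/
def Bicombining (A : V → V → Prop) : Prop := ∀ r, IsRet A r → inDeg A r = 2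

/-- Galled: every reticulation node `r` has an ancestor `u` admitting two
internal-node-disjoint directed paths from `u` to `r` in which every node other
than `r` is a tree node. -/
def Galled (A : V → V → Prop) : Prop :=
  ∀ r, IsRet A r → ∃ u, Relation.TransGen A u r ∧ ∃ p₁ p₂ : List V,
    IsPath A u r p₁ ∧ IsPath A u r p₂ ∧ p₁ ≠ p₂ ∧
    (∀ x, x ∈ p₁ → x ∈ p₂ → x = u ∨ x = r) ∧
    (∀ x ∈ p₁, x ≠ r → IsTreeNode A x) ∧ (∀ x ∈ p₂, x ≠ r → IsTreeNode A x)

/-- Restriction of a digraph to a vertex subset. -/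
def Restrict (A : V → V → Prop) (S : Set V) : V → V → Prop :=
  fun a b => a ∈ S ∧ b ∈ S ∧ A a b

/-- Descendants of `u` (including `u`); the vertex set of the subnetwork `D_N(u)`. -/
def Desc (A : V → V → Prop) (u : V) : Set V := {v | Relation.ReflTransGen A u v}

/-- Binary network: the root has outdegree 2, leaves have degree 1, and every other
node has total degree 3. -/
def IsBinary (A : V → V → Prop) (ρ : V) : Prop :=
  outDeg A ρ = 2 ∧ ∀ v, v ≠ ρ →
    (inDeg A v = 1 ∧ outDeg A v = 0) ∨ (inDeg A v = 1 ∧ outDeg A v = 2) ∨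
    (inDeg A v = 2 ∧ outDeg A v = 1)

/-- A phylogenetic tree: a network with no reticulation nodes. -/
def IsPhyloTree (A : W → W → Prop) (ρ : W) : Prop :=
  IsNetwork A ρ ∧ ∀ w, ¬ IsRet A w

/-- A node with indegree 1 and outdegree 1 (a suppressible node). -/
def Deg11 (A : V → V → Prop) (v : V) : Prop := inDeg A v = 1 ∧ outDeg A v = 1

/-- There is a directed path from `a` to `b` (of length ≥ 1) all of whose internal
nodes are suppressible. -/
def SubdivPath (A : V → V → Prop) (a b : V) : Prop :=
  ∃ p : List V, IsPath A a b p ∧ 2 ≤ p.length ∧ ∀ z ∈ p, z ≠ a → z ≠ b → Deg11 A z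

/-- `φ` witnesses that the digraph `A'` on the vertex set `S` is a subdivision of the
tree `AT` restricted to the vertex set `SW`: `φ` injectively maps the tree nodes onto
the non-suppressible nodes, edges of the tree correspond exactly to directed paths
whose internal nodes are suppressible, and leaves are mapped according to the leaf
correspondence `θ` (same labels). -/
def SubdivWitness (A' : V → V → Prop) (S : Set V) (AT : W → W → Prop) (SW : Set W)
    (θ : W → V) (φ : W → V) : Prop :=
  Set.InjOn φ SW ∧ (∀ w ∈ SW, φ w ∈ S) ∧
  (∀ x ∈ S, ¬ Deg11 (Restrict A' S) x → ∃ w ∈ SW, φ w = x) ∧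
  (∀ x ∈ SW, ∀ y ∈ SW, (Restrict AT SW x y ↔ SubdivPath (Restrict A' S) (φ x) (φ y))) ∧
  (∀ w ∈ SW, outDeg (Restrict AT SW) w = 0 → φ w = θ w)

/-- The digraph `A'` on vertex set `S` is a subdivision of the tree `AT` on `SW`. -/
def IsSubdivisionOf (A' : V → V → Prop) (S : Set V) (AT : W → W → Prop) (SW : Set W)
    (θ : W → V) : Prop :=
  ∃ φ, SubdivWitness A' S AT SW θ φ

/-- `E`, `D`, `φ` witness that the subnetwork of `A` on vertex set `S` displays the
subtree of `AT` on vertex set `SW`: `E` is a set of reticulation edges of the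
subnetwork containing all but one of the incoming edges of each reticulation node of
the subnetwork, `D` is a set of deleted nodes, and `φ` witnesses that the result is a
subdivision of the subtree. -/
def DisplayWitness (A : V → V → Prop) (S : Set V) (AT : W → W → Prop) (SW : Set W)
    (θ : W → V) (E : Set (V × V)) (D : Set V) (φ : W → V) : Prop :=
  (∀ e ∈ E, Restrict A S e.1 e.2 ∧ 2 ≤ inDeg (Restrict A S) e.2) ∧
  (∀ r ∈ S, 2 ≤ inDeg (Restrict A S) r →
     ∃ p, Restrict A S p r ∧ (p, r) ∉ E ∧ ∀ q, Restrict A S q r → q ≠ p → (q, r) ∈ E) ∧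
  SubdivWitness (fun a b => Restrict A S a b ∧ (a, b) ∉ E) (S \ D) AT SW θ φ

/-- The subnetwork of `A` on vertex set `S` displays the subtree of `AT` on `SW`. -/
def DisplaysOn (A : V → V → Prop) (S : Set V) (AT : W → W → Prop) (SW : Set W)
    (θ : W → V) : Prop :=
  ∃ E D φ, DisplayWitness A S AT SW θ E D φ

/-- The leaves of the subnetwork of `A` induced on vertex set `S`. -/
def SubLeaves (A : V → V → Prop) (S : Set V) : Set V :=
  {v | v ∈ S ∧ outDeg (Restrict A S) v = 0}

/-- `B` is a soft cluster in the subnetwork of `A` on vertex set `S`: `B` is the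
cluster of some node of some phylogenetic tree displayed by that subnetwork. -/
def SoftClusterOn (A : V → V → Prop) (S : Set V) (B : Set V) : Prop :=
  ∃ (W : Type) (AT : W → W → Prop) (ρT : W) (θ : W → V),
    IsPhyloTree AT ρT ∧
    Set.BijOn θ {w | IsLeaf AT w} (SubLeaves A S) ∧
    DisplaysOn A S AT Set.univ θ ∧
    ∃ x : W, θ '' {w | IsLeaf AT w ∧ Relation.ReflTransGen AT x w} = B

/-- `B` is a soft cluster of the node `u` of `N`: there are `E` and `D` as in the
definition of display such that `u` is a node of `(N − E) − D` and the set of leaves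
of `N` below `u` in `(N − E) − D` equals `B`. -/
def SoftClusterAt (A : V → V → Prop) (u : V) (B : Set V) : Prop :=
  ∃ (E : Set (V × V)) (D : Set V),
    (∀ e ∈ E, A e.1 e.2 ∧ 2 ≤ inDeg A e.2) ∧
    (∀ r, 2 ≤ inDeg A r → ∃ p, A p r ∧ (p, r) ∉ E ∧ ∀ q, A q r → q ≠ p → (q, r) ∈ E) ∧
    (∃ (W : Type) (AT : W → W → Prop) (ρT : W) (θ : W → V),
      IsPhyloTree AT ρT ∧ Set.BijOn θ {w | IsLeaf AT w} {v | IsLeaf A v} ∧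
      IsSubdivisionOf (fun a b => A a b ∧ (a, b) ∉ E) (Set.univ \ D) AT Set.univ θ) ∧
    u ∉ D ∧
    {ℓ | IsLeaf A ℓ ∧
      Relation.ReflTransGen (fun a b => A a b ∧ (a, b) ∉ E ∧ a ∉ D ∧ b ∉ D) u ℓ} = B

/-- `w` is the lowest common ancestor of the set `X` in the (tree-like) digraph `A`. -/
def IsLCAIn (A : V → V → Prop) (X : Set V) (w : V) : Prop :=
  (∀ x ∈ X, Relation.ReflTransGen A w x) ∧
  ∀ w', (∀ x ∈ X, Relation.ReflTransGen A w' x) → Relation.ReflTransGen A w' w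

end PhyloNet

namespace PhyloNet

open Relation

variable {V W : Type}

section Generic

variable {R : V → V → Prop} {a b c x p g : V}

lemma wf_of_acyclic [Finite V] (hac : ∀ x : V, ¬ TransGen R x x) : WellFounded R := by
  haveI : IsTrans V (TransGen R) := ⟨fun _ _ _ => TransGen.trans⟩
  haveI : IsIrrefl V (TransGen R) := ⟨fun a h => hac a h⟩
  exact Subrelation.wf (fun {a b} h => TransGen.single h)
    (Finite.wellFounded_of_trans_of_irrefl (TransGen R))

lemma wf_flip_of_acyclic [Finite V] (hac : ∀ x : V, ¬ TransGen R x x) :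
    WellFounded (fun a b => R b a) := by
  haveI : IsTrans V (fun a b : V => TransGen R b a) := ⟨fun _ _ _ h1 h2 => h2.trans h1⟩
  haveI : IsIrrefl V (fun a b : V => TransGen R b a) := ⟨fun a h => hac a h⟩
  exact Subrelation.wf (fun {a b} h => TransGen.single h)
    (Finite.wellFounded_of_trans_of_irrefl (fun a b : V => TransGen R b a))

lemma rtg_ne_trans (h : ReflTransGen R a b) (hne : a ≠ b) : TransGen R a b := by
  rcases h.cases_head with h' | ⟨c, hac, hcb⟩
  · exact absurd h' hne
  · exact TransGen.head' hac hcb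

lemma ancestors_chain (huniq : ∀ ⦃y u u'⦄, R u y → R u' y → u = u')
    (hax : ReflTransGen R a x) (hbx : ReflTransGen R b x) :
    ReflTransGen R a b ∨ ReflTransGen R b a := by
  induction hax using ReflTransGen.head_induction_on with
  | refl => exact Or.inr hbx
  | head h' h ih =>
    rename_i a' c
    rcases ih with h1 | h1
    · exact Or.inl (h1.head h')
    · by_cases hbc : b = c
      · exact Or.inl (hbc ▸ ReflTransGen.single h')
      · obtain ⟨d, hbd, hdc⟩ := (Relation.TransGen.tail'_iff).mp (rtg_ne_trans h1 hbc)
        exact Or.inr (huniq hdc h' ▸ hbd)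

lemma children_incomp (huniq : ∀ ⦃y u u'⦄, R u y → R u' y → u = u')
    (hac : ∀ x : V, ¬ TransGen R x x) (hpa : R p a) (hpb : R p b) (hab : a ≠ b)
    (h : ReflTransGen R a b) : False := by
  obtain ⟨d, had, hdb⟩ := (Relation.TransGen.tail'_iff).mp (rtg_ne_trans h hab)
  have hdp : d = p := huniq hdb hpb
  exact hac p (TransGen.head' hpa (hdp ▸ had))

lemma isPath_singleton : IsPath R a a [a] := ⟨List.isChain_singleton a, rfl, rfl⟩

lemma isPath_ne_nil {q : List V} (h : IsPath R a b q) : q ≠ [] := by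
  intro hq; rw [hq] at h; exact absurd h.2.1 (by simp)

lemma isPath_snoc {q : List V} (h : IsPath R a b q) (hbc : R b c) :
    IsPath R a c (q ++ [c]) := by
  obtain ⟨h1, h2, h3⟩ := h
  refine ⟨?_, ?_, List.getLast?_concat⟩
  · refine List.isChain_append.mpr ⟨h1, List.isChain_singleton c, ?_⟩
    intro u hu w hw
    rw [h3, Option.mem_def, Option.some.injEq] at hu
    simp only [List.head?_cons, Option.mem_def, Option.some.injEq] at hw
    rw [← hu, ← hw]; exact hbc
  · cases q with
    | nil => exact absurd rfl (isPath_ne_nil ⟨h1, h2, h3⟩)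
    | cons x t => simpa using h2

lemma path2rtg : ∀ (q : List V) (a b : V), IsPath R a b q → ReflTransGen R a b := by
  intro q
  induction q with
  | nil => intro a b h; exact absurd rfl (isPath_ne_nil h)
  | cons x t ih =>
    intro a b h
    obtain ⟨h1, h2, h3⟩ := h
    simp only [List.head?_cons, Option.some.injEq] at h2
    cases t with
    | nil =>
      simp only [List.getLast?_singleton, Option.some.injEq] at h3
      rw [← h2, ← h3]
    | cons y s =>
      simp only [List.Chain', List.isChain_cons_cons] at h1
      rw [List.getLast?_cons_cons] at h3
      exact (ih y b ⟨h1.2, rfl, h3⟩).head (h2 ▸ h1.1)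

lemma path_nodes : ∀ (q : List V) (a b : V), IsPath R a b q →
    ∀ z ∈ q, ReflTransGen R a z := by
  intro q
  induction q with
  | nil => intro a b h; exact absurd rfl (isPath_ne_nil h)
  | cons x t ih =>
    intro a b h z hz
    obtain ⟨h1, h2, h3⟩ := h
    simp only [List.head?_cons, Option.some.injEq] at h2
    rcases List.mem_cons.mp hz with hzx | hzt
    · rw [hzx, ← h2]
    · cases t with
      | nil => exact absurd hzt (List.not_mem_nil)
      | cons y s =>
        simp only [List.Chain', List.isChain_cons_cons] at h1
        rw [List.getLast?_cons_cons] at h3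
        exact ((ih y b ⟨h1.2, rfl, h3⟩ z hzt).head (h2 ▸ h1.1))

lemma chain'_strengthen {Q : V → V → Prop} :
    ∀ (q : List V), q.Chain' R → (∀ u ∈ q, ∀ w ∈ q, R u w → Q u w) → q.Chain' Q := by
  intro q
  induction q with
  | nil => intro _ _; exact List.isChain_nil
  | cons x t ih =>
    intro h1 h2
    cases t with
    | nil => exact List.isChain_singleton x
    | cons y s =>
      simp only [List.Chain', List.isChain_cons_cons] at h1 ⊢
      refine ⟨h2 x (by simp) y (by simp) h1.1, ih h1.2 ?_⟩
      intro u hu w hw hR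
      exact h2 u (List.mem_cons_of_mem x hu) w (List.mem_cons_of_mem x hw) hR

lemma list2deg {D11 : V → Prop} :
    ∀ (q : List V) (a b : V), IsPath R a b q → (∀ z ∈ q, z ≠ b → D11 z) →
    ReflTransGen (fun u w => R u w ∧ D11 u) a b := by
  intro q
  induction q with
  | nil => intro a b h _; exact absurd rfl (isPath_ne_nil h)
  | cons x t ih =>
    intro a b h hD
    obtain ⟨h1, h2, h3⟩ := h
    simp only [List.head?_cons, Option.some.injEq] at h2
    by_cases hab : a = b
    · rw [hab]
    cases t with
    | nil =>
      simp only [List.getLast?_singleton, Option.some.injEq] at h3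
      rw [← h2, ← h3] at hab; exact absurd rfl hab
    | cons y s =>
      simp only [List.Chain', List.isChain_cons_cons] at h1
      rw [List.getLast?_cons_cons] at h3
      have hDx : D11 a := by
        have := hD x (by simp) (by rw [h2]; exact hab)
        rwa [h2] at this
      refine (ih y b ⟨h1.2, rfl, h3⟩ ?_).head ⟨h2 ▸ h1.1, hDx⟩
      intro z hz hzb
      exact hD z (List.mem_cons_of_mem x hz) hzb

lemma uniq_fwd {D11 : V → Prop}
    (hsucc : ∀ u w w', D11 u → R u w → R u w' → w = w') {a g1 g2 : V}
    (h1 : ReflTransGen (fun u w => R u w ∧ D11 u) a g1) (hg1 : ¬ D11 g1)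
    (h2 : ReflTransGen (fun u w => R u w ∧ D11 u) a g2) (hg2 : ¬ D11 g2) :
    g1 = g2 := by
  induction h1 using ReflTransGen.head_induction_on with
  | refl =>
    rcases h2.cases_head with h' | ⟨c, hac, _⟩
    · exact h'
    · exact absurd hac.2 hg1
  | head h' h ih =>
    rcases h2.cases_head with heq | ⟨c2, hac2, hc2⟩
    · exact absurd (heq ▸ h'.2) hg2
    · have : c2 = _ := hsucc _ _ _ h'.2 hac2.1 h'.1
      exact ih (this ▸ hc2)

lemma uniq_fwd_v2 {D11 : V → Prop}
    (hsucc : ∀ u w w', D11 u → R u w → R u w' → w = w') {a g e : V}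
    (hwalk : ReflTransGen (fun u w => R u w ∧ D11 u) a g) (hg : ¬ D11 g)
    (ha : D11 a) (he : ReflTransGen R a e) (hne : ¬ D11 e) :
    ReflTransGen R g e := by
  induction hwalk using ReflTransGen.head_induction_on with
  | refl => exact absurd ha hg
  | head h' h ih =>
    rename_i a' c
    rcases he.cases_head with heq | ⟨c2, hac2, hc2e⟩
    · exact absurd (heq ▸ ha) hne
    · have hcc : c2 = c := hsucc _ _ _ ha hac2 h'.1
      rw [hcc] at hc2e
      by_cases hDc : D11 c
      · exact ih hDc hc2e
      · rcases h.cases_head with heq2 | ⟨c3, hac3, _⟩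
        · rw [← heq2]; exact hc2e
        · exact absurd hac3.2 hDc

end Generic

section Network

variable {A : V → V → Prop} {ρ : V}

lemma ncard_ne_zero_nonempty {s : Set V} (h : s.ncard ≠ 0) : s.Nonempty := by
  rcases s.eq_empty_or_nonempty with h' | h'
  · rw [h'] at h; simp at h
  · exact h'

lemma net_no_parent_of_root [Finite V] (hN : IsNetwork A ρ) {u : V} (h : A u ρ) : False := by
  have h0 : ({w | A w ρ} : Set V) = ∅ := (Set.ncard_eq_zero (Set.toFinite _)).mp hN.root_indeg
  have hm : u ∈ {w | A w ρ} := h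
  rw [h0] at hm; exact hm

lemma unique_of_inDeg_one {y u u' : V} (h : inDeg A y = 1) (h1 : A u y) (h2 : A u' y) :
    u = u' := by
  obtain ⟨c, hc⟩ := Set.ncard_eq_one.mp h
  have e1 : u ∈ {w | A w y} := h1
  have e2 : u' ∈ {w | A w y} := h2
  rw [hc] at e1 e2; rw [Set.mem_singleton_iff] at e1 e2; rw [e1, e2]

lemma unique_child_of_outDeg_one {y u u' : V} (h : outDeg A y = 1) (h1 : A y u)
    (h2 : A y u') : u = u' := by
  obtain ⟨c, hc⟩ := Set.ncard_eq_one.mp h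
  have e1 : u ∈ {w | A y w} := h1
  have e2 : u' ∈ {w | A y w} := h2
  rw [hc] at e1 e2; rw [Set.mem_singleton_iff] at e1 e2; rw [e1, e2]

lemma exists_child_of_outDeg_one {y : V} (h : outDeg A y = 1) : ∃ c, A y c := by
  obtain ⟨c, hc⟩ := Set.ncard_eq_one.mp h
  refine ⟨c, ?_⟩
  have hm : c ∈ ({c} : Set V) := rfl
  rw [← hc] at hm; exact hm

lemma two_le_inDeg [Finite V] {y u u' : V} (h1 : A u y) (h2 : A u' y) (hne : u ≠ u') :
    2 ≤ inDeg A y := by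
  have hsub : ({u, u'} : Set V) ⊆ {w | A w y} := by
    intro z hz; rcases hz with hz | hz
    · rw [hz]; exact h1
    · rw [hz]; exact h2
  calc 2 = ({u, u'} : Set V).ncard := (Set.ncard_pair hne).symm
    _ ≤ _ := Set.ncard_le_ncard hsub (Set.toFinite _)

lemma leaf_no_child [Finite V] {y c : V} (h : outDeg A y = 0) (hc : A y c) : False := by
  have h0 : ({w | A y w} : Set V) = ∅ := (Set.ncard_eq_zero (Set.toFinite _)).mp h
  have hm : c ∈ {w | A y w} := hc
  rw [h0] at hm; exact hm

lemma leaf_not_ret {y : V} (h : IsLeaf A y) : ¬ IsRet A y := by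
  intro hr
  have h1 := hr.2
  rw [h.2] at h1
  exact absurd h1 (by norm_num)

lemma net_unique_parent [Finite V] (hN : IsNetwork A ρ) {y u u' : V} (hnr : ¬ IsRet A y)
    (h1 : A u y) (h2 : A u' y) : u = u' := by
  by_cases hy : y = ρ
  · exact absurd (hy ▸ h1) (fun h => net_no_parent_of_root hN h)
  · rcases hN.degree_cond y hy with ⟨hi, _⟩ | ⟨hi, ho⟩
    · exact unique_of_inDeg_one hi h1 h2
    · exact absurd ⟨hi, ho⟩ hnr

lemma ret_of_two_parents [Finite V] (hN : IsNetwork A ρ) {y u u' : V} (h1 : A u y)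
    (h2 : A u' y) (hne : u ≠ u') : IsRet A y := by
  by_contra h; exact hne (net_unique_parent hN h h1 h2)

/-- Tree-edge relation: an edge of `N` between two tree nodes. -/
def TP (A : V → V → Prop) : V → V → Prop :=
  fun a b => A a b ∧ IsTreeNode A a ∧ IsTreeNode A b

lemma tp_uniq [Finite V] (hN : IsNetwork A ρ) :
    ∀ ⦃y u u'⦄, TP A u y → TP A u' y → u = u' :=
  fun _ _ _ h h' => net_unique_parent hN h.2.2 h.1 h'.1

lemma tnc_tree {u₀ u : V} (h0 : IsTreeNode A u₀) (h : ReflTransGen (TAdj A) u₀ u) :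
    IsTreeNode A u := by
  induction h with
  | refl => exact h0
  | tail _ hstep _ => exact hstep.2.1

lemma tnc_mem_tree {C : Set V} {u : V} (hC : IsTNC A C) (h : u ∈ C) : IsTreeNode A u := by
  obtain ⟨u₀, h0, rfl⟩ := hC
  exact tnc_tree h0 h

lemma exists_croot [Finite V] (hN : IsNetwork A ρ) : ∀ u : V, IsTreeNode A u →
    ∃ r, (IsTreeNode A r ∧ ∀ a, IsTreeNode A a → ¬ A a r) ∧ ReflTransGen (TP A) r u := by
  have wfA := wf_of_acyclic (R := A) hN.acyclic
  intro u
  refine wfA.induction (C := fun u => IsTreeNode A u →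
    ∃ r, (IsTreeNode A r ∧ ∀ a, IsTreeNode A a → ¬ A a r) ∧ ReflTransGen (TP A) r u) u ?_
  intro x ih hx
  by_cases hp : ∃ a, IsTreeNode A a ∧ A a x
  · obtain ⟨a, ha, hax⟩ := hp
    obtain ⟨r, hr, hru⟩ := ih a hax ha
    exact ⟨r, hr, hru.tail ⟨hax, ha, hx⟩⟩
  · push_neg at hp
    exact ⟨x, ⟨hx, hp⟩, ReflTransGen.refl⟩

lemma croot_eq_of_rtg {r r' : V} (hr' : ∀ a, IsTreeNode A a → ¬ A a r')
    (h : ReflTransGen (TP A) r r') : r = r' := by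
  rcases h.cases_tail with h | ⟨c, _, hc⟩
  · exact h.symm
  · exact absurd hc.1 (hr' c hc.2.1)

lemma comp_croot_unique [Finite V] (hN : IsNetwork A ρ) {u₀ : V} :
    ∀ u : V, ReflTransGen (TAdj A) u₀ u →
    ∀ r r' : V, (∀ a, IsTreeNode A a → ¬ A a r) → (∀ a, IsTreeNode A a → ¬ A a r') →
    ReflTransGen (TP A) r u₀ → ReflTransGen (TP A) r' u → r = r' := by
  intro u h
  induction h with
  | refl =>
    intro r r' hr hr' h1 h2
    rcases ancestors_chain (tp_uniq hN) h1 h2 with hh | hh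
    · exact croot_eq_of_rtg hr' hh
    · exact (croot_eq_of_rtg hr hh).symm
  | tail hwalk hstep ih =>
    rename_i b c
    intro r r' hr hr' h1 h2
    have hbt : IsTreeNode A b := hstep.1
    obtain ⟨rb, hrb, hrbu⟩ := exists_croot hN b hbt
    have e1 : r = rb := ih r rb hr hrb.2 h1 hrbu
    rcases hstep.2.2 with hbc | hcb
    · have h2' : ReflTransGen (TP A) rb c := hrbu.tail ⟨hbc, hstep.1, hstep.2.1⟩
      rcases ancestors_chain (tp_uniq hN) h2' h2 with hh | hh
      · exact e1.trans (croot_eq_of_rtg hr' hh)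
      · exact e1.trans (croot_eq_of_rtg hrb.2 hh).symm
    · have h2' : ReflTransGen (TP A) r' b := h2.tail ⟨hcb, hstep.2.1, hstep.1⟩
      rcases ancestors_chain (tp_uniq hN) hrbu h2' with hh | hh
      · exact e1.trans (croot_eq_of_rtg hr' hh)
      · exact e1.trans (croot_eq_of_rtg hrb.2 hh).symm

lemma croot_is_comp_root [Finite V] (hN : IsNetwork A ρ) {C : Set V} {rC u : V}
    (hC : IsTNC A C) (hrC : CompRoot A C rC) (hu : u ∈ C)
    (hpl : ∀ a, IsTreeNode A a → ¬ A a u) : u = rC := by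
  obtain ⟨u₀, h0, rfl⟩ := hC
  obtain ⟨r₀, hr₀, hr₀u⟩ := exists_croot hN u₀ h0
  have e1 : r₀ = u := comp_croot_unique hN u hu r₀ u hr₀.2 hpl hr₀u ReflTransGen.refl
  have e2 : r₀ = rC := comp_croot_unique hN rC hrC.1 r₀ rC hr₀.2 hrC.2 hr₀u ReflTransGen.refl
  rw [← e1, e2]

lemma comp_root_reaches [Finite V] (hN : IsNetwork A ρ) {C : Set V} {rC : V}
    (hC : IsTNC A C) (hrC : CompRoot A C rC) : ∀ u ∈ C, ReflTransGen A rC u := by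
  have wfA := wf_of_acyclic (R := A) hN.acyclic
  intro u
  refine wfA.induction (C := fun u => u ∈ C → ReflTransGen A rC u) u ?_
  intro x ih hx
  by_cases hxr : x = rC
  · rw [hxr]
  · have hxt : IsTreeNode A x := tnc_mem_tree hC hx
    have hnp : ¬ ∀ a, IsTreeNode A a → ¬ A a x :=
      fun hpl => hxr (croot_is_comp_root hN hC hrC hx hpl)
    push_neg at hnp
    obtain ⟨p, hpt, hpx⟩ := hnp
    have hpC : p ∈ C := by
      obtain ⟨u₀, h0, rfl⟩ := hC
      exact hx.tail ⟨hxt, hpt, Or.inr hpx⟩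
    exact (ih p hpx hpC).tail hpx

lemma lowest_single_leaf {C : Set V} {rC c : V} (hC : LowestBig A C) (hrC : CompRoot A C rC)
    (hct : IsTreeNode A c) (hpl : ∀ a, IsTreeNode A a → ¬ A a c) (htr : TransGen A rC c) :
    IsLeaf A c := by
  have h := hC.2 {v | ReflTransGen (TAdj A) c v} c rC ⟨c, hct, rfl⟩
    ⟨ReflTransGen.refl, hpl⟩ hrC htr
  obtain ⟨l, hl, hset⟩ := h
  have hm : c ∈ ({l} : Set V) := by rw [← hset]; exact ReflTransGen.refl
  rw [Set.mem_singleton_iff] at hm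
  rw [hm]; exact hl

lemma lcset_desc [Finite V] (hN : IsNetwork A ρ) {C : Set V} {rC : V} (hC : IsTNC A C)
    (hrC : CompRoot A C rC) {l : V} (hl : l ∈ LCset A C) : ReflTransGen A rC l := by
  rcases hl with ⟨hlC, _⟩ | ⟨r, hr, hrl⟩
  · exact comp_root_reaches hN hC hrC l hlC
  · have h2 : 2 ≤ inDeg A r := hr.1.1
    have hne : ({u | A u r} : Set V).ncard ≠ 0 := by
      simp only [inDeg] at h2; omega
    obtain ⟨p, hp⟩ := ncard_ne_zero_nonempty hne
    exact ((comp_root_reaches hN hC hrC p (hr.2 p hp)).tail hp).tail hrl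

lemma s2 [Finite V] (hN : IsNetwork A ρ) {C : Set V} {rC : V} (hC : LowestBig A C)
    (hrC : CompRoot A C rC) {l : V} (hlc : l ∈ LCset A C) (hleaf : IsLeaf A l) :
    ∀ x, IsRet A x → TransGen A rC x → ReflTransGen A x l → ∀ q, A q x → q ∈ C := by
  have wfD := wf_flip_of_acyclic (R := A) hN.acyclic
  intro x
  refine wfD.induction (C := fun x => IsRet A x → TransGen A rC x → ReflTransGen A x l →
    ∀ q, A q x → q ∈ C) x ?_
  intro x ih hret htr hxl q hq
  obtain ⟨c, hxc⟩ := exists_child_of_outDeg_one hret.2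
  have hlx : x ≠ l := by
    intro h
    have := hret.2
    rw [h, hleaf.2] at this
    exact absurd this (by norm_num)
  rcases hxl.cases_head with heq | ⟨y, hxy, hyl⟩
  · exact absurd heq hlx
  have hyc : y = c := unique_child_of_outDeg_one hret.2 hxy hxc
  rw [hyc] at hyl
  by_cases hcret : IsRet A c
  · have hxC := ih c hxc hcret (htr.tail hxc) hyl x hxc
    exact absurd hret (tnc_mem_tree hC.1.1 hxC)
  · have hcpl : ∀ a, IsTreeNode A a → ¬ A a c := by
      intro a hat hac
      rw [net_unique_parent hN hcret hac hxc] at hat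
      exact hat hret
    have hcl : IsLeaf A c := lowest_single_leaf hC hrC hcret hcpl (htr.tail hxc)
    have hlc2 : l = c := by
      rcases hyl.cases_head with heq | ⟨y', hcy', _⟩
      · exact heq.symm
      · exact absurd hcy' (fun h => leaf_no_child hcl.2 h)
    rcases hlc with ⟨hlC, _⟩ | ⟨r, hr, hrl⟩
    · have hrc2 : l = rC := croot_is_comp_root hN hC.1.1 hrC hlC (by rw [hlc2]; exact hcpl)
      have : TransGen A rC rC := by
        have h' := htr.tail hxc
        rw [← hlc2, hrc2] at h'
        exact h'
      exact absurd this (hN.acyclic rC)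
    · have hxl' : A x l := by rw [hlc2]; exact hxc
      have hrx : r = x := net_unique_parent hN (leaf_not_ret hleaf) hrl hxl'
      exact hr.2 q (hrx ▸ hq)

lemma pass [Finite V] (hN : IsNetwork A ρ) {C : Set V} {rC : V} (hC : LowestBig A C)
    (hrC : CompRoot A C rC) {l : V} (hlc : l ∈ LCset A C) (hleaf : IsLeaf A l)
    {B : V → V → Prop} (hB : ∀ a b, B a b → A a b) :
    ∀ x, ReflTransGen B x l → ¬ ReflTransGen A rC x →
      ReflTransGen B x rC ∧ ReflTransGen B rC l := by
  intro x h
  induction h using ReflTransGen.head_induction_on with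
  | refl => exact fun hx => absurd (lcset_desc hN hC.1.1 hrC hlc) hx
  | head h' h ih =>
    rename_i a c
    intro hna
    by_cases hrc : ReflTransGen A rC c
    · by_cases hceq : c = rC
      · rw [hceq] at h h'
        exact ⟨ReflTransGen.single h', h⟩
      · have htrc : TransGen A rC c := rtg_ne_trans hrc (fun e => hceq e.symm)
        obtain ⟨z, hz, hzc⟩ := (Relation.TransGen.tail'_iff).mp htrc
        have hza : z ≠ a := fun e => hna (e ▸ hz)
        have hcret : IsRet A c := ret_of_two_parents hN hzc (hB a c h') hza
        have haC : a ∈ C := s2 hN hC hrC hlc hleaf c hcret htrc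
          (ReflTransGen.mono (fun u w (hb : B u w) => hB u w hb) _ _ h) a (hB a c h')
        exact absurd (comp_root_reaches hN hC.1.1 hrC a haC) hna
    · obtain ⟨h1, h2⟩ := ih hrc
      exact ⟨h1.head h', h2⟩

end Network

section Display

variable {A : V → V → Prop} {ρ : V} {AT : W → W → Prop} {ρT : W} {θ φ : W → V}
variable {E : Set (V × V)} {D : Set V}

/-- The graph `(N − E) − D`. -/
def A2 (A : V → V → Prop) (E : Set (V × V)) (D : Set V) : V → V → Prop :=
  Restrict (fun a b => Restrict A Set.univ a b ∧ (a, b) ∉ E) (Set.univ \ D)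

lemma a2_sub {a b : V} (h : A2 A E D a b) : A a b := h.2.2.1.2.2

lemma a2_memD {a b : V} (h : A2 A E D a b) : a ∈ Set.univ \ D ∧ b ∈ Set.univ \ D :=
  ⟨h.1, h.2.1⟩

lemma a2_notE {a b : V} (h : A2 A E D a b) : (a, b) ∉ E := h.2.2.2

lemma a2_intro {a b : V} (ha : a ∉ D) (hb : b ∉ D) (hA : A a b) (hE : (a, b) ∉ E) :
    A2 A E D a b :=
  ⟨⟨Set.mem_univ a, ha⟩, ⟨Set.mem_univ b, hb⟩, ⟨Set.mem_univ a, Set.mem_univ b, hA⟩, hE⟩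

lemma inDeg_univ (B : V → V → Prop) (y : V) : inDeg (Restrict B Set.univ) y = inDeg B y := by
  unfold inDeg; congr 1; ext u; simp [Restrict]

lemma outDeg_univ (B : V → V → Prop) (y : V) :
    outDeg (Restrict B Set.univ) y = outDeg B y := by
  unfold outDeg; congr 1; ext u; simp [Restrict]

lemma a2_in_unique [Finite V] (hN : IsNetwork A ρ)
    (hE2 : ∀ r ∈ Set.univ, 2 ≤ inDeg (Restrict A Set.univ) r → ∃ p,
      Restrict A Set.univ p r ∧ (p, r) ∉ E ∧
      ∀ q, Restrict A Set.univ q r → q ≠ p → (q, r) ∈ E)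
    {y u u' : V} (h1 : A2 A E D u y) (h2 : A2 A E D u' y) : u = u' := by
  by_cases hret : IsRet A y
  · obtain ⟨p, _, _, hall⟩ := hE2 y (Set.mem_univ y) (by rw [inDeg_univ]; exact hret.1)
    have e1 : u = p := by
      by_contra hne
      exact a2_notE h1 (hall u ⟨Set.mem_univ u, Set.mem_univ y, a2_sub h1⟩ hne)
    have e2 : u' = p := by
      by_contra hne
      exact a2_notE h2 (hall u' ⟨Set.mem_univ u', Set.mem_univ y, a2_sub h2⟩ hne)
    rw [e1, e2]
  · exact net_unique_parent hN hret (a2_sub h1) (a2_sub h2)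

lemma a2_succ_unique {y u u' : V} (hd : Deg11 (A2 A E D) y) (h1 : A2 A E D y u)
    (h2 : A2 A E D y u') : u = u' :=
  unique_child_of_outDeg_one hd.2 h1 h2

lemma leaf_not_deg11 [Finite V] {y : V} (h : IsLeaf A y) : ¬ Deg11 (A2 A E D) y := by
  intro hd
  obtain ⟨c, hc⟩ := exists_child_of_outDeg_one hd.2
  exact leaf_no_child h.2 (a2_sub hc)

lemma next_img [Finite V] (hN : IsNetwork A ρ) :
    ∀ a : V, Deg11 (A2 A E D) a →
    ∃ g, ReflTransGen (fun u w => A2 A E D u w ∧ Deg11 (A2 A E D) u) a g ∧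
      ¬ Deg11 (A2 A E D) g := by
  have wfD := wf_flip_of_acyclic (R := A) hN.acyclic
  intro a
  refine wfD.induction (C := fun a => Deg11 (A2 A E D) a →
    ∃ g, ReflTransGen (fun u w => A2 A E D u w ∧ Deg11 (A2 A E D) u) a g ∧
      ¬ Deg11 (A2 A E D) g) a ?_
  intro x ih hx
  obtain ⟨b, hb⟩ := exists_child_of_outDeg_one (A := A2 A E D) hx.2
  by_cases hdb : Deg11 (A2 A E D) b
  · obtain ⟨g, hg1, hg2⟩ := ih b (a2_sub hb) hdb
    exact ⟨g, hg1.head ⟨hb, hx⟩, hg2⟩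
  · exact ⟨b, ReflTransGen.single ⟨hb, hx⟩, hdb⟩

lemma images_not_deg11 [Finite V] [Finite W] (hN : IsNetwork A ρ)
    (hT : IsPhyloTree AT ρT) (hbinT : IsBinary AT ρT)
    (hθ : Set.BijOn θ {w | IsLeaf AT w} {v | IsLeaf A v})
    (hφinj : Set.InjOn φ Set.univ)
    (hφiff : ∀ x ∈ Set.univ, ∀ y ∈ Set.univ,
      (Restrict AT Set.univ x y ↔ SubdivPath (A2 A E D) (φ x) (φ y)))
    (hφleaf : ∀ w ∈ Set.univ, outDeg (Restrict AT Set.univ) w = 0 → φ w = θ w) :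
    ∀ x : W, ¬ Deg11 (A2 A E D) (φ x) := by
  have wfD := wf_flip_of_acyclic (R := AT) hT.1.acyclic
  intro x
  refine wfD.induction (C := fun x => ¬ Deg11 (A2 A E D) (φ x)) x ?_
  intro x ih hd
  have hout : outDeg AT x = 0 ∨ outDeg AT x = 2 := by
    by_cases hx : x = ρT
    · right; rw [hx]; exact hbinT.1
    · rcases hbinT.2 x hx with ⟨_, h⟩ | ⟨_, h⟩ | ⟨hi, ho⟩
      · left; exact h
      · right; exact h
      · exact absurd ⟨le_of_eq hi.symm, ho⟩ (hT.2 x)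
  rcases hout with h0 | h2
  · have hxρ : x ≠ ρT := by
      intro e
      have := hbinT.1
      rw [e] at h0
      omega
    have hi1 : inDeg AT x = 1 := by
      rcases hbinT.2 x hxρ with ⟨hi, _⟩ | ⟨_, ho⟩ | ⟨_, ho⟩
      · exact hi
      · omega
      · omega
    have hφx : φ x = θ x := hφleaf x (Set.mem_univ x) (by rw [outDeg_univ]; exact h0)
    have hθx : IsLeaf A (θ x) := hθ.1 ⟨hi1, h0⟩
    rw [hφx] at hd
    obtain ⟨b, hb⟩ := exists_child_of_outDeg_one (A := A2 A E D) hd.2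
    exact leaf_no_child hθx.2 (a2_sub hb)
  · obtain ⟨c1, c2, hne, hset⟩ := Set.ncard_eq_two.mp h2
    have hc1 : AT x c1 := by
      have : c1 ∈ ({c1, c2} : Set W) := by simp
      rw [← hset] at this; exact this
    have hc2 : AT x c2 := by
      have : c2 ∈ ({c1, c2} : Set W) := by simp
      rw [← hset] at this; exact this
    obtain ⟨p1, hp1p, _, hint1⟩ :=
      (hφiff x (Set.mem_univ x) c1 (Set.mem_univ c1)).mp
        ⟨Set.mem_univ x, Set.mem_univ c1, hc1⟩
    obtain ⟨p2, hp2p, _, hint2⟩ :=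
      (hφiff x (Set.mem_univ x) c2 (Set.mem_univ c2)).mp
        ⟨Set.mem_univ x, Set.mem_univ c2, hc2⟩
    have hd1 : ReflTransGen (fun u w => A2 A E D u w ∧ Deg11 (A2 A E D) u) (φ x) (φ c1) := by
      refine list2deg p1 _ _ hp1p ?_
      intro z hz hzb
      by_cases hzx : z = φ x
      · rw [hzx]; exact hd
      · exact hint1 z hz hzx hzb
    have hd2 : ReflTransGen (fun u w => A2 A E D u w ∧ Deg11 (A2 A E D) u) (φ x) (φ c2) := by
      refine list2deg p2 _ _ hp2p ?_
      intro z hz hzb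
      by_cases hzx : z = φ x
      · rw [hzx]; exact hd
      · exact hint2 z hz hzx hzb
    have heq : φ c1 = φ c2 :=
      uniq_fwd (fun u w w' hdu h h' => a2_succ_unique hdu h h')
        hd1 (ih c1 hc1) hd2 (ih c2 hc2)
    exact hne (hφinj (Set.mem_univ c1) (Set.mem_univ c2) heq)

lemma reach_reflect [Finite V]
    (hφsurj : ∀ x ∈ Set.univ \ D, ¬ Deg11 (A2 A E D) x → ∃ w ∈ Set.univ, φ w = x)
    (hφiff : ∀ x ∈ Set.univ, ∀ y ∈ Set.univ,
      (Restrict AT Set.univ x y ↔ SubdivPath (A2 A E D) (φ x) (φ y)))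
    (u : W) :
    ∀ y, ReflTransGen (A2 A E D) (φ u) y →
    ∃ w q, ReflTransGen AT u w ∧ IsPath (A2 A E D) (φ w) y q ∧
      (∀ z ∈ q, z ≠ φ w → z ≠ y → Deg11 (A2 A E D) z) ∧
      (Deg11 (A2 A E D) y ∨ y = φ w) := by
  intro y h
  induction h with
  | refl =>
    exact ⟨u, [φ u], ReflTransGen.refl, isPath_singleton,
      fun z hz h1 _ => absurd (List.mem_singleton.mp hz) h1, Or.inr rfl⟩
  | tail hwalk hstep ih =>
    rename_i y' y
    obtain ⟨w', q', hw', hq', hint', hdisj⟩ := ih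
    have hyD : y ∈ Set.univ \ D := (a2_memD hstep).2
    obtain ⟨pn, hpn, hintn, hlenn⟩ : ∃ pn, IsPath (A2 A E D) (φ w') y pn ∧
        (∀ z ∈ pn, z ≠ φ w' → z ≠ y → Deg11 (A2 A E D) z) ∧ 2 ≤ pn.length := by
      rcases hdisj with hD11 | hEq
      · refine ⟨q' ++ [y], isPath_snoc hq' hstep, ?_, ?_⟩
        · intro z hz h1 h2
          rcases List.mem_append.mp hz with hz | hz
          · by_cases hzy' : z = y'
            · rw [hzy']; exact hD11
            · exact hint' z hz h1 hzy'
          · exact absurd (List.mem_singleton.mp hz) h2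
        · have : q' ≠ [] := isPath_ne_nil hq'
          have : 1 ≤ q'.length := List.length_pos_iff.mpr this
          rw [List.length_append]
          simp only [List.length_singleton]
          omega
      · refine ⟨[φ w', y], ?_, ?_, by simp⟩
        · refine ⟨List.isChain_cons_cons.mpr ⟨hEq ▸ hstep, List.isChain_singleton y⟩, rfl, ?_⟩
          rw [List.getLast?_cons_cons, List.getLast?_singleton]
        · intro z hz h1 h2
          rcases List.mem_cons.mp hz with hz | hz
          · exact absurd hz h1
          · exact absurd (List.mem_singleton.mp hz) h2
    by_cases hy : Deg11 (A2 A E D) y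
    · exact ⟨w', pn, hw', hpn, hintn, Or.inl hy⟩
    · by_cases hyw : y = φ w'
      · refine ⟨w', [φ w'], hw', ⟨List.isChain_singleton _, rfl, ?_⟩,
          fun z hz h1 _ => absurd (List.mem_singleton.mp hz) h1, Or.inr hyw⟩
        rw [List.getLast?_singleton, hyw]
      · obtain ⟨w'', _, hw''⟩ := hφsurj y hyD hy
        have hsp : SubdivPath (A2 A E D) (φ w') (φ w'') :=
          ⟨pn, by rw [hw'']; exact hpn, hlenn, by rw [hw'']; exact hintn⟩
        have hATe : AT w' w'' :=
          ((hφiff w' (Set.mem_univ w') w'' (Set.mem_univ w'')).mpr hsp).2.2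
        refine ⟨w'', [y], hw'.tail hATe, by rw [hw'']; exact isPath_singleton,
          fun z hz _ h2 => absurd (List.mem_singleton.mp hz) h2, Or.inr hw''.symm⟩

lemma reach_reflect' [Finite V]
    (hφsurj : ∀ x ∈ Set.univ \ D, ¬ Deg11 (A2 A E D) x → ∃ w ∈ Set.univ, φ w = x)
    (hφiff : ∀ x ∈ Set.univ, ∀ y ∈ Set.univ,
      (Restrict AT Set.univ x y ↔ SubdivPath (A2 A E D) (φ x) (φ y)))
    {u : W} {y : V} (h : ReflTransGen (A2 A E D) (φ u) y) (hy : ¬ Deg11 (A2 A E D) y) :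
    ∃ w, ReflTransGen AT u w ∧ φ w = y := by
  obtain ⟨w, q, hw, _, _, hdisj⟩ := reach_reflect hφsurj hφiff u y h
  rcases hdisj with hD | hEq
  · exact absurd hD hy
  · exact ⟨w, hw, hEq.symm⟩

lemma tree_edge_rtg
    (hφiff : ∀ x ∈ Set.univ, ∀ y ∈ Set.univ,
      (Restrict AT Set.univ x y ↔ SubdivPath (A2 A E D) (φ x) (φ y)))
    {x y : W} (h : AT x y) : ReflTransGen (A2 A E D) (φ x) (φ y) := by
  obtain ⟨q, hq, _, _⟩ := (hφiff x (Set.mem_univ x) y (Set.mem_univ y)).mp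
    ⟨Set.mem_univ x, Set.mem_univ y, h⟩
  exact path2rtg q _ _ hq

lemma tree_rtg
    (hφiff : ∀ x ∈ Set.univ, ∀ y ∈ Set.univ,
      (Restrict AT Set.univ x y ↔ SubdivPath (A2 A E D) (φ x) (φ y)))
    {x y : W} (h : ReflTransGen AT x y) :
    ReflTransGen (A2 A E D) (φ x) (φ y) := by
  induction h with
  | refl => exact ReflTransGen.refl
  | tail _ hstep ih => exact ih.trans (tree_edge_rtg hφiff hstep)

end Display

end PhyloNet

namespace PhyloNet

/-- Let `N` be a binary reticulation-visible network, `C` a lowest big tree node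
component with root `rC`, `T` a binary phylogenetic tree with the same leaves as `N`
(via the leaf correspondence `θ`), `ℓ ∈ L_C`, and `v 1, …, v (t+1)` the path in `T`
from the root to (the tree leaf corresponding to) `ℓ`.  Let `s_C` be the least `s`
such that the subtree branching off the path at `v s` contains a leaf of `L_C`.
If `N` displays `T`, then the subnetwork `D_N(ρ(C))` displays the subtree
`D_T(v s_C)`. -/
theorem lowest_component_displays_subtree {V W : Type} (A : V → V → Prop) (ρ : V)
    (hN : IsNetwork A ρ) (hbin : IsBinary A ρ) (hRV : RetVisible A ρ)
    (C : Set V) (rC : V) (hC : LowestBig A C) (hrC : CompRoot A C rC)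
    (AT : W → W → Prop) (ρT : W) (hT : IsPhyloTree AT ρT) (hbinT : IsBinary AT ρT)
    (θ : W → V) (hθ : Set.BijOn θ {w | IsLeaf AT w} {v | IsLeaf A v})
    (ℓ : V) (hℓ : ℓ ∈ LCset A C)
    (wl : W) (hwl : IsLeaf AT wl) (hθwl : θ wl = ℓ)
    (t : ℕ) (v : ℕ → W) (hv1 : v 1 = ρT) (hvlast : v (t + 1) = wl)
    (hpath : ∀ i, 1 ≤ i → i ≤ t → AT (v i) (v (i + 1)))
    (Hit : ℕ → Prop)
    (hHit : ∀ s, Hit s ↔ ∃ w, IsLeaf AT w ∧ Relation.ReflTransGen AT (v s) w ∧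
        (s ≤ t → ¬ Relation.ReflTransGen AT (v (s + 1)) w) ∧ θ w ∈ LCset A C)
    (sC : ℕ) (hsC1 : 1 ≤ sC) (hsC2 : sC ≤ t + 1) (hsChit : Hit sC)
    (hsCmin : ∀ s, 1 ≤ s → s < sC → ¬ Hit s)
    (hdisp : DisplaysOn A Set.univ AT Set.univ θ) :
    DisplaysOn A (Desc A rC) AT (Desc AT (v sC)) θ := by
  haveI : Finite V := hN.finite
  haveI : Finite W := hT.1.finite
  classical
  obtain ⟨E, D, φ, hE1, hE2, hφinj, hφmem, hφsurj, hφiff, hφleaf⟩ := hdisp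
  have hφsurj' : ∀ x ∈ Set.univ \ D, ¬ Deg11 (A2 A E D) x → ∃ w ∈ Set.univ, φ w = x := hφsurj
  have hφiff' : ∀ x ∈ Set.univ, ∀ y ∈ Set.univ,
      (Restrict AT Set.univ x y ↔ SubdivPath (A2 A E D) (φ x) (φ y)) := hφiff
  have hTuniq : ∀ ⦃y u u'⦄, AT u y → AT u' y → u = u' :=
    fun y u u' h h' => net_unique_parent hT.1 (hT.2 y) h h'
  have hTacyc := hT.1.acyclic
  have hPC : ∀ i, 1 ≤ i → i ≤ t + 1 → Relation.ReflTransGen AT (v i) (v (t + 1)) := by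
    have key : ∀ d i, 1 ≤ i → i + d = t + 1 → Relation.ReflTransGen AT (v i) (v (i + d)) := by
      intro d
      induction d with
      | zero => intro i _ _; rw [Nat.add_zero]
      | succ d ihd =>
        intro i h1 h2
        have he : i + (d + 1) = (i + 1) + d := by omega
        rw [he]
        exact Relation.ReflTransGen.head (hpath i h1 (by omega)) (ihd (i + 1) (by omega) (by omega))
    intro i h1 h2
    have he : i + (t + 1 - i) = t + 1 := by omega
    have h3 := key (t + 1 - i) i h1 he
    rwa [he] at h3
  have hφwl : φ wl = ℓ := by
    rw [← hθwl]
    exact hφleaf wl (Set.mem_univ wl) (by rw [outDeg_univ]; exact hwl.2)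
  have hlleaf : IsLeaf A ℓ := by rw [← hθwl]; exact hθ.1 hwl
  set x0 := φ (v sC) with hx0def
  -- KEY CLAIM: the image of `v sC` lies below `rC`
  have hKEY : Relation.ReflTransGen A rC x0 := by
    by_cases hsc : sC = t + 1
    · have hx0l : x0 = ℓ := by rw [hx0def, hsc, hvlast, hφwl]
      rw [hx0l]
      exact lcset_desc hN hC.1.1 hrC hℓ
    · have hsct : sC ≤ t := by omega
      obtain ⟨w₁, hw₁leaf, hw₁below, hw₁not, hw₁LC⟩ := (hHit sC).mp hsChit
      have hφw₁ : φ w₁ = θ w₁ :=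
        hφleaf w₁ (Set.mem_univ w₁) (by rw [outDeg_univ]; exact hw₁leaf.2)
      have hl1leaf : IsLeaf A (θ w₁) := hθ.1 hw₁leaf
      by_contra hdesc
      have hx0l1 : Relation.ReflTransGen (A2 A E D) x0 (θ w₁) := by
        rw [← hφw₁]; exact tree_rtg hφiff' hw₁below
      have hx0l : Relation.ReflTransGen (A2 A E D) x0 ℓ := by
        rw [← hφwl]
        exact tree_rtg hφiff' (by rw [← hvlast]; exact hPC sC hsC1 hsC2)
      obtain ⟨hxrc, hrcl1⟩ :=
        pass hN hC hrC hw₁LC hl1leaf (fun a b h => a2_sub h) x0 hx0l1 hdesc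
      obtain ⟨_, hrcl⟩ := pass hN hC hrC hℓ hlleaf (fun a b h => a2_sub h) x0 hx0l hdesc
      have hx0ne : x0 ≠ rC := fun e => hdesc (by rw [e])
      have hrCD : rC ∈ Set.univ \ D := by
        obtain ⟨z, _, hz⟩ := (Relation.TransGen.tail'_iff).mp (rtg_ne_trans hxrc hx0ne)
        exact (a2_memD hz).2
      have hsucc : ∀ u w w', Deg11 (A2 A E D) u → A2 A E D u w → A2 A E D u w' → w = w' :=
        fun u w w' hdu h h' => a2_succ_unique hdu h h'
      obtain ⟨g, hgrC, hgD, hgne, hgl1, hgl⟩ :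
          ∃ g, Relation.ReflTransGen A rC g ∧ g ∈ Set.univ \ D ∧ ¬ Deg11 (A2 A E D) g ∧
            Relation.ReflTransGen (A2 A E D) g (θ w₁) ∧
            Relation.ReflTransGen (A2 A E D) g ℓ := by
        by_cases hd : Deg11 (A2 A E D) rC
        · obtain ⟨g, hwalk, hg⟩ := next_img hN rC hd
          have hggne : rC ≠ g := fun e => hg (e ▸ hd)
          have hgD : g ∈ Set.univ \ D := by
            obtain ⟨z, _, hz⟩ := (Relation.TransGen.tail'_iff).mp (rtg_ne_trans hwalk hggne)
            exact (a2_memD hz.1).2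
          refine ⟨g, Relation.ReflTransGen.mono (fun a b (h : A2 A E D a b ∧ Deg11 (A2 A E D) a) => a2_sub h.1) _ _ hwalk, hgD, hg,
            uniq_fwd_v2 hsucc hwalk hg hd hrcl1 (leaf_not_deg11 hl1leaf),
            uniq_fwd_v2 hsucc hwalk hg hd hrcl (leaf_not_deg11 hlleaf)⟩
        · exact ⟨rC, Relation.ReflTransGen.refl, hrCD, hd, hrcl1, hrcl⟩
      obtain ⟨z, _, hφz⟩ := hφsurj' g hgD hgne
      rw [← hφz] at hgl1 hgl
      obtain ⟨w', hzw', hφw'⟩ := reach_reflect' hφsurj' hφiff' hgl1 (leaf_not_deg11 hl1leaf)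
      have hw'w₁ : w' = w₁ :=
        hφinj (Set.mem_univ w') (Set.mem_univ w₁) (by rw [hφw', hφw₁])
      rw [hw'w₁] at hzw'
      obtain ⟨w'', hzw'', hφw''⟩ := reach_reflect' hφsurj' hφiff' hgl (leaf_not_deg11 hlleaf)
      have hw''wl : w'' = wl :=
        hφinj (Set.mem_univ w'') (Set.mem_univ wl) (by rw [hφw'', hφwl])
      rw [hw''wl] at hzw''
      rcases ancestors_chain hTuniq hzw' hw₁below with hcomp | hcomp
      · have h1 : Relation.ReflTransGen A g x0 :=
          Relation.ReflTransGen.mono (fun a b (h : A2 A E D a b) => a2_sub h) _ _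
            (by rw [← hφz]; exact tree_rtg hφiff' hcomp)
        exact hdesc (hgrC.trans h1)
      · by_cases hzv : z = v sC
        · refine hdesc ?_
          rw [hzv] at hφz
          rw [hx0def, hφz]
          exact hgrC
        · obtain ⟨cs, hvc, hcz⟩ :=
            (Relation.TransGen.head'_iff).mp (rtg_ne_trans hcomp (fun e => hzv e.symm))
          by_cases hcs : cs = v (sC + 1)
          · exact hw₁not hsct (by rw [← hcs]; exact hcz.trans hzw')
          · have hc1 : Relation.ReflTransGen AT cs wl := hcz.trans hzw''
            have hc2 : Relation.ReflTransGen AT (v (sC + 1)) wl := by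
              rw [← hvlast]; exact hPC (sC + 1) (by omega) (by omega)
            have hedge : AT (v sC) (v (sC + 1)) := hpath sC hsC1 hsct
            rcases ancestors_chain hTuniq hc1 hc2 with hcc | hcc
            · exact children_incomp hTuniq hTacyc hvc hedge hcs hcc
            · exact children_incomp hTuniq hTacyc hedge hvc (fun e => hcs e.symm) hcc
  -- the vertex set of the new embedding
  set S' : Set V := {y | Relation.ReflTransGen (A2 A E D) x0 y} with hS'def
  have hx0S' : x0 ∈ S' := Relation.ReflTransGen.refl
  have hS'dc : ∀ {a b : V}, a ∈ S' → A2 A E D a b → b ∈ S' :=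
    fun ha h => Relation.ReflTransGen.tail ha h
  have hS'D : ∀ y ∈ S', y ∈ Set.univ \ D := by
    intro y hy
    rcases (hy : Relation.ReflTransGen (A2 A E D) x0 y).cases_tail with he | ⟨c, _, hc⟩
    · rw [he]; exact hφmem (v sC) (Set.mem_univ _)
    · exact (a2_memD hc).2
  have hS'SS : ∀ y ∈ S', y ∈ Desc A rC :=
    fun y hy => hKEY.trans (Relation.ReflTransGen.mono (fun a b (h : A2 A E D a b) => a2_sub h) _ _ hy)
  set E' : Set (V × V) := {e | e ∈ E ∧ Restrict A (Desc A rC) e.1 e.2 ∧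
      2 ≤ inDeg (Restrict A (Desc A rC)) e.2} with hE'def
  set D'' : Set V := {y | y ∉ S'} with hD''def
  have hSETEQ : Desc A rC \ D'' = S' := by
    ext y
    constructor
    · intro h
      exact not_not.mp h.2
    · intro h
      exact ⟨hS'SS y h, fun hn => hn h⟩
  have hREL : Restrict (fun a b => Restrict A (Desc A rC) a b ∧ (a, b) ∉ E')
      (Desc A rC \ D'') = Restrict (A2 A E D) S' := by
    funext a b
    apply propext
    constructor
    · rintro ⟨ha, hb, hras, hnE'⟩
      have haS' : a ∈ S' := (Set.ext_iff.mp hSETEQ a).mp ha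
      have hbS' : b ∈ S' := (Set.ext_iff.mp hSETEQ b).mp hb
      refine ⟨haS', hbS', ?_⟩
      refine a2_intro ((hS'D a haS').2) ((hS'D b hbS').2) hras.2.2 ?_
      intro hEmem
      apply hnE'
      refine ⟨hEmem, hras, ?_⟩
      by_cases hbx : b = x0
      · exact absurd (Relation.TransGen.tail'
          (Relation.ReflTransGen.mono (fun u w (h : A2 A E D u w) => a2_sub h) _ _ haS') (hbx ▸ hras.2.2))
          (hN.acyclic x0)
      · rcases (hbS' : Relation.ReflTransGen (A2 A E D) x0 b).cases_tail with he | ⟨c, hcS, hcb⟩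
        · exact absurd he hbx
        · have hca : c ≠ a := fun e => (a2_notE hcb) (e ▸ hEmem)
          exact two_le_inDeg (A := Restrict A (Desc A rC))
            ⟨hS'SS c hcS, hras.2.1, a2_sub hcb⟩ hras hca
    · rintro ⟨ha, hb, hA2⟩
      refine ⟨(Set.ext_iff.mp hSETEQ a).mpr ha, (Set.ext_iff.mp hSETEQ b).mpr hb,
        ⟨hS'SS a ha, hS'SS b hb, a2_sub hA2⟩, ?_⟩
      intro hE'mem
      exact a2_notE hA2 hE'mem.1
  have hNDI := images_not_deg11 hN hT hbinT hθ hφinj hφiff' hφleaf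
  have hTRANS : ∀ x ∈ S', Deg11 (A2 A E D) x → Deg11 (Restrict (A2 A E D) S') x := by
    intro x hx hD
    have hxne : x ≠ x0 := fun e => hNDI (v sC) (by rw [← hx0def, ← e]; exact hD)
    constructor
    · obtain ⟨c0, hc0⟩ := Set.ncard_eq_one.mp hD.1
      rcases (hx : Relation.ReflTransGen (A2 A E D) x0 x).cases_tail with he | ⟨c, hcS, hcx⟩
      · exact absurd he hxne
      · have hcc0 : c = c0 := by
          have hm : c ∈ {u | A2 A E D u x} := hcx
          rw [hc0] at hm; exact hm
        have hset : {u | Restrict (A2 A E D) S' u x} = {c0} := by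
          ext u
          simp only [Set.mem_singleton_iff]
          constructor
          · intro hu
            have hm : u ∈ {u | A2 A E D u x} := hu.2.2
            rw [hc0] at hm; exact hm
          · intro hu
            rw [hu, ← hcc0]
            exact ⟨hcS, hx, hcx⟩
        simp only [inDeg]
        rw [hset, Set.ncard_singleton]
    · obtain ⟨c0, hc0⟩ := Set.ncard_eq_one.mp hD.2
      have hxc0 : A2 A E D x c0 := by
        have hm : c0 ∈ ({c0} : Set V) := rfl
        rw [← hc0] at hm; exact hm
      have hset : {w | Restrict (A2 A E D) S' x w} = {c0} := by
        ext u
        simp only [Set.mem_singleton_iff]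
        constructor
        · intro hu
          have hm : u ∈ {w | A2 A E D x w} := hu.2.2
          rw [hc0] at hm; exact hm
        · intro hu
          rw [hu]
          exact ⟨hx, hS'dc hx hxc0, hxc0⟩
      simp only [outDeg]
      rw [hset, Set.ncard_singleton]
  have hREVT : ∀ x ∈ S', Deg11 (Restrict (A2 A E D) S') x → Deg11 (A2 A E D) x := by
    intro x hx hD
    obtain ⟨c0, hc0⟩ := Set.ncard_eq_one.mp hD.1
    have hc0' : Restrict (A2 A E D) S' c0 x := by
      have hm : c0 ∈ ({c0} : Set V) := rfl
      rw [← hc0] at hm; exact hm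
    constructor
    · have hset : {u | A2 A E D u x} = {c0} := by
        ext u
        simp only [Set.mem_singleton_iff]
        constructor
        · intro hu
          exact a2_in_unique hN hE2 hu hc0'.2.2
        · intro hu
          rw [hu]; exact hc0'.2.2
      simp only [inDeg]
      rw [hset, Set.ncard_singleton]
    · have hset : {w | A2 A E D x w} = {w | Restrict (A2 A E D) S' x w} := by
        ext u
        constructor
        · intro hu
          exact ⟨hx, hS'dc hx hu, hu⟩
        · intro hu
          exact hu.2.2
      have h2 := hD.2
      simp only [outDeg] at h2 ⊢
      rw [hset]
      exact h2
  refine ⟨E', D'', φ, ?_, ?_, ?_⟩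
  · -- reticulation edges of the subnetwork
    intro e he
    exact ⟨he.2.1, he.2.2⟩
  · -- all but one incoming edge of each subnetwork reticulation
    intro r hrSS h2r
    have hPsub : {u | Restrict A (Desc A rC) u r} ⊆ {u | A u r} := fun u hu => hu.2.2
    have hle := Set.ncard_le_ncard hPsub (Set.toFinite _)
    by_cases hrρ : r = ρ
    · exfalso
      have h0 := hN.root_indeg
      rw [← hrρ] at h0
      simp only [inDeg] at h0 h2r
      omega
    · rcases hbin.2 r hrρ with ⟨hi, _⟩ | ⟨hi, _⟩ | ⟨hi, _⟩
      · exfalso; simp only [inDeg] at hi h2r; omega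
      · exfalso; simp only [inDeg] at hi h2r; omega
      · obtain ⟨p, hpr, hpE, hall⟩ := hE2 r (Set.mem_univ r)
          (by rw [inDeg_univ, hi])
        have hPeq : {u | Restrict A (Desc A rC) u r} = {u | A u r} := by
          refine Set.eq_of_subset_of_ncard_le hPsub ?_ (Set.toFinite _)
          simp only [inDeg] at hi h2r
          omega
        have hpS : Restrict A (Desc A rC) p r := by
          have hm : p ∈ {u | A u r} := hpr.2.2
          rw [← hPeq] at hm; exact hm
        refine ⟨p, hpS, fun hmem => hpE hmem.1, ?_⟩
        intro q hq hqp
        exact ⟨hall q ⟨Set.mem_univ q, Set.mem_univ r, hq.2.2⟩ hqp, hq, h2r⟩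
  · -- the subdivision witness
    refine ⟨Set.InjOn.mono (Set.subset_univ _) hφinj, ?_, ?_, ?_, ?_⟩
    · -- φ maps into S \ D''
      intro w hw
      rw [hSETEQ]
      exact tree_rtg hφiff' hw
    · -- surjectivity onto non-suppressible nodes
      intro x hx hnd
      rw [hREL] at hnd
      rw [hSETEQ] at hx
      have hnd2 : ¬ Deg11 (A2 A E D) x := fun hD => hnd (hTRANS x hx hD)
      obtain ⟨w, hw, hφw⟩ := reach_reflect' hφsurj' hφiff'
        (hx : Relation.ReflTransGen (A2 A E D) x0 x) hnd2
      exact ⟨w, hw, hφw⟩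
    · -- tree edges correspond to subdivision paths
      intro x hxSW y hySW
      rw [hREL]
      constructor
      · intro h
        obtain ⟨q, hq, hlen, hint⟩ := (hφiff' x (Set.mem_univ x) y (Set.mem_univ y)).mp
          ⟨Set.mem_univ x, Set.mem_univ y, h.2.2⟩
        have hφxS' : φ x ∈ S' := tree_rtg hφiff' hxSW
        have hmem : ∀ z ∈ q, z ∈ S' :=
          fun z hz => Relation.ReflTransGen.trans hφxS' (path_nodes q _ _ hq z hz)
        refine ⟨q, ⟨chain'_strengthen q hq.1
          (fun u hu w hw hA => ⟨hmem u hu, hmem w hw, hA⟩), hq.2.1, hq.2.2⟩, hlen, ?_⟩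
        intro z hz h1 h2
        exact hTRANS z (hmem z hz) (hint z hz h1 h2)
      · intro h
        obtain ⟨q, hq, hlen, hint⟩ := h
        have hmemq : ∀ z ∈ q, z ∈ S' := by
          intro z hz
          rcases (path_nodes q _ _ hq z hz).cases_tail with he | ⟨c, _, hc⟩
          · rw [he]; exact tree_rtg hφiff' hxSW
          · exact hc.2.1
        have hq' : IsPath (A2 A E D) (φ x) (φ y) q :=
          ⟨List.IsChain.imp (fun a b hab => hab.2.2) hq.1, hq.2.1, hq.2.2⟩
        have hGl : Restrict AT Set.univ x y :=
          (hφiff' x (Set.mem_univ x) y (Set.mem_univ y)).mpr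
            ⟨q, hq', hlen, fun z hz h1 h2 => hREVT z (hmemq z hz) (hint z hz h1 h2)⟩
        exact ⟨hxSW, hySW, hGl.2.2⟩
    · -- leaves are labelled correctly
      intro w hwSW h0
      refine hφleaf w (Set.mem_univ w) ?_
      rw [outDeg_univ]
      by_contra hne
      obtain ⟨c, hc⟩ := ncard_ne_zero_nonempty (s := {c | AT w c}) (by
        simp only [outDeg] at hne ⊢
        exact hne)
      have hcSW : c ∈ Desc AT (v sC) := Relation.ReflTransGen.tail hwSW hc
      have hedge : Restrict AT (Desc AT (v sC)) w c := ⟨hwSW, hcSW, hc⟩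
      simp only [outDeg] at h0
      have hempty : ({x | Restrict AT (Desc AT (v sC)) w x} : Set W) = ∅ :=
        (Set.ncard_eq_zero (Set.toFinite _)).mp h0
      have hm : c ∈ {x | Restrict AT (Desc AT (v sC)) w x} := hedge
      rw [hempty] at hm
      exact hm


end PhyloNet
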